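/- The map γ preserves edges of the Cayley graph of F₂ with respect to {a, b}: for all x, y ∈ F₂, one has x⁻¹y ∈ S if and only if γ(x)⁻¹γ(y) ∈ S, where S = {a, a⁻¹, b, b⁻¹}. In other words, γ is an automorphism of the Cayley graph of F₂. -/

import Mathlib

/-- `F2` is the free group on two generators. -/
abbrev F2 := FreeGroup (Fin 2)

/-- The first generator `a`. -/
def a : F2 := FreeGroup.of 0

/-- The second generator `b`. -/
def b : F2 := FreeGroup.of 1

/-- The automorphism `ι` of `F2` determined by `ι a = a⁻¹` and `ι b = b⁻¹`
(given here as the induced group homomorphism, which is in fact an automorphism). -/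
def iota : F2 →* F2 := FreeGroup.lift fun i => (FreeGroup.of i)⁻¹

/-- `beginsWith ℓ x` means that the reduced word of `x` is nonempty and its first letter
is the generator `ℓ` or its inverse. -/
def beginsWith (ℓ : Fin 2) (x : F2) : Prop :=
  (FreeGroup.toWord x).head?.map Prod.fst = some ℓ

instance (ℓ : Fin 2) (x : F2) : Decidable (beginsWith ℓ x) := by
  unfold beginsWith; infer_instance

/-- The map `γ : F2 → F2`: `γ x = x` if the reduced word of `x` begins with `a` or `a⁻¹`,
and `γ x = ι x` otherwise (in particular `γ 1 = 1`). -/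
def gamma (x : F2) : F2 := if beginsWith 0 x then x else iota x

/-! ### Auxiliary lemmas -/

/-- Flip the sign of a letter. -/
def fl (p : Fin 2 × Bool) : Fin 2 × Bool := (p.1, !p.2)

lemma reduce_map_fl (L : List (Fin 2 × Bool)) :
    FreeGroup.reduce (L.map fl) = (FreeGroup.reduce L).map fl := by
  induction L with
  | nil => rfl
  | cons p L ih =>
    rw [List.map_cons, FreeGroup.reduce.cons, FreeGroup.reduce.cons, ih]
    cases hr : FreeGroup.reduce L with
    | nil => rfl
    | cons q t =>
      simp only [List.map_cons]
      by_cases hc : p.1 = q.1 ∧ p.2 = !q.2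
      · rw [if_pos hc, if_pos ⟨hc.1, by simp [fl, hc.2]⟩]
      · rw [if_neg hc, if_neg (by simpa [fl] using hc), List.map_cons, List.map_cons]

lemma iota_mk (L : List (Fin 2 × Bool)) :
    iota (FreeGroup.mk L) = FreeGroup.mk (L.map fl) := by
  induction L with
  | nil => rw [← FreeGroup.one_eq_mk, map_one, List.map_nil, ← FreeGroup.one_eq_mk]
  | cons p L ih =>
    have h1 : FreeGroup.mk (p :: L) = FreeGroup.mk [p] * FreeGroup.mk L := by
      rw [FreeGroup.mul_mk]; rfl
    have h2 : FreeGroup.mk (fl p :: L.map fl) = FreeGroup.mk [fl p] * FreeGroup.mk (L.map fl) := by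
      rw [FreeGroup.mul_mk]; rfl
    rw [h1, map_mul, ih, List.map_cons, h2]
    congr 1
    rcases p with ⟨g, e⟩
    cases e
    · have : FreeGroup.mk [(g, false)] = (FreeGroup.of g)⁻¹ := by
        rw [FreeGroup.of, FreeGroup.inv_mk]; rfl
      rw [this, map_inv, iota, FreeGroup.lift_apply_of, inv_inv, FreeGroup.of]
      rfl
    · show iota (FreeGroup.of g) = _
      rw [iota, FreeGroup.lift_apply_of, FreeGroup.of, FreeGroup.inv_mk]
      rfl

lemma toWord_iota (x : F2) : (iota x).toWord = x.toWord.map fl := by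
  conv_lhs => rw [← FreeGroup.mk_toWord (x := x)]
  rw [iota_mk, FreeGroup.toWord_mk, reduce_map_fl, FreeGroup.reduce_toWord]

lemma iota_iota (x : F2) : iota (iota x) = x := by
  apply FreeGroup.toWord_injective
  rw [toWord_iota, toWord_iota, List.map_map]
  have : fl ∘ fl = id := by funext p; simp [fl]
  rw [this, List.map_id]

lemma beginsWith_iota (ℓ : Fin 2) (x : F2) : beginsWith ℓ (iota x) ↔ beginsWith ℓ x := by
  unfold beginsWith
  rw [toWord_iota]
  cases x.toWord <;> simp [fl]

lemma gamma_gamma (x : F2) : gamma (gamma x) = x := by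
  unfold gamma
  by_cases h : beginsWith 0 x
  · simp [h]
  · rw [if_neg h, if_neg (by rwa [beginsWith_iota]), iota_iota]

lemma S_desc (s : F2) (hs : s ∈ ({a, a⁻¹, b, b⁻¹} : Set F2)) :
    ∃ g e, s = FreeGroup.mk [(g, e)] ∧ s⁻¹ = FreeGroup.mk [(g, !e)] := by
  have ha : ∀ g : Fin 2, (FreeGroup.of g : F2) = FreeGroup.mk [(g, true)] := fun g => rfl
  have hinv : ∀ g : Fin 2, (FreeGroup.of g : F2)⁻¹ = FreeGroup.mk [(g, false)] := by
    intro g; rw [ha, FreeGroup.inv_mk]; rfl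
  rcases hs with h | h | h | h <;> subst h
  · exact ⟨0, true, ha 0, hinv 0⟩
  · exact ⟨0, false, hinv 0, by rw [inv_inv]; exact ha 0⟩
  · exact ⟨1, true, ha 1, hinv 1⟩
  · exact ⟨1, false, hinv 1, by rw [inv_inv]; exact ha 1⟩

lemma iota_S {s : F2} (hs : s ∈ ({a, a⁻¹, b, b⁻¹} : Set F2)) :
    iota s ∈ ({a, a⁻¹, b, b⁻¹} : Set F2) := by
  have hia : iota a = a⁻¹ := FreeGroup.lift_apply_of
  have hib : iota b = b⁻¹ := FreeGroup.lift_apply_of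
  rcases hs with h | h | h | h <;> subst h
  · rw [hia]; right; left; rfl
  · rw [map_inv, hia, inv_inv]; left; rfl
  · rw [hib]; right; right; right; rfl
  · rw [map_inv, hib, inv_inv]; right; right; left; rfl

lemma sublist_tail {q : Fin 2 × Bool} {L M : List (Fin 2 × Bool)} (h : List.Sublist L (q :: M))
    (hne : L.head? ≠ some q) : List.Sublist L M := by
  cases h with
  | cons _ h' => exact h'
  | cons_cons _ h' => exact absurd rfl hne

/-- Key combinatorial lemma: if `x` begins with `a`, `y` does not, `y ≠ 1`, and `x⁻¹y` is a
generator or inverse generator, we get a contradiction. -/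
lemma keyK (x y : F2) (hx : beginsWith 0 x) (hy : ¬ beginsWith 0 y) (hy1 : y ≠ 1)
    (h : x⁻¹ * y ∈ ({a, a⁻¹, b, b⁻¹} : Set F2)) : False := by
  obtain ⟨g, e, hs, hsinv⟩ := S_desc _ h
  have hyx : y = x * FreeGroup.mk [(g, e)] := by rw [← hs]; group
  have hxy : x = y * FreeGroup.mk [(g, !e)] := by
    rw [← hsinv]; group
  -- heads
  obtain ⟨px, tx, hLx⟩ : ∃ p t, x.toWord = p :: t := by
    cases hLx : x.toWord with
    | nil => rw [beginsWith, hLx] at hx; simp at hx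
    | cons p t => exact ⟨p, t, rfl⟩
  have hpx : px.1 = 0 := by
    rw [beginsWith, hLx] at hx; simpa using hx
  obtain ⟨py, ty, hLy⟩ : ∃ p t, y.toWord = p :: t := by
    cases hLy : y.toWord with
    | nil => exact absurd (FreeGroup.toWord_eq_nil_iff.mp hLy) hy1
    | cons p t => exact ⟨p, t, rfl⟩
  have hpy : py.1 ≠ 0 := by
    rw [beginsWith, hLy] at hy; simpa using hy
  -- sublist facts
  have hw1 : FreeGroup.toWord (FreeGroup.mk [(g, e)] : F2) = [(g, e)] := by
    rw [FreeGroup.toWord_mk, FreeGroup.reduce_singleton]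
  have hw2 : FreeGroup.toWord (FreeGroup.mk [(g, !e)] : F2) = [(g, !e)] := by
    rw [FreeGroup.toWord_mk, FreeGroup.reduce_singleton]
  have h1 : List.Sublist y.toWord (x.toWord ++ [(g, e)]) := by
    have := FreeGroup.toWord_mul_sublist x (FreeGroup.mk [(g, e)])
    rwa [← hyx, hw1] at this
  have h2 : List.Sublist x.toWord (y.toWord ++ [(g, !e)]) := by
    have := FreeGroup.toWord_mul_sublist y (FreeGroup.mk [(g, !e)])
    rwa [← hxy, hw2] at this
  have h1' : List.Sublist y.toWord (tx ++ [(g, e)]) := by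
    refine sublist_tail (q := px) (M := tx ++ [(g, e)]) ?_ ?_
    · simpa [hLx] using h1
    · rw [hLy]; simp only [List.head?_cons]
      intro hc
      exact hpy (by rw [Option.some_inj] at hc; rw [hc, hpx])
  have h2' : List.Sublist x.toWord (ty ++ [(g, !e)]) := by
    refine sublist_tail (q := py) (M := ty ++ [(g, !e)]) ?_ ?_
    · simpa [hLy] using h2
    · rw [hLx]; simp only [List.head?_cons]
      intro hc
      exact hpy (by rw [Option.some_inj] at hc; rw [← hc, hpx])
  -- lengths
  have hl1 : y.toWord.length ≤ tx.length + 1 := by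
    simpa using h1'.length_le
  have hl2 : x.toWord.length ≤ ty.length + 1 := by
    simpa using h2'.length_le
  have hlx : x.toWord.length = tx.length + 1 := by rw [hLx]; simp
  have hly : y.toWord.length = ty.length + 1 := by rw [hLy]; simp
  have hlen : y.toWord.length = tx.length + 1 := by omega
  have heq : y.toWord = tx ++ [(g, e)] := h1'.eq_of_length (by simpa using hlen)
  -- cancel
  have hxmk : x = FreeGroup.mk tx := by
    have : y = FreeGroup.mk tx * FreeGroup.mk [(g, e)] := by
      rw [FreeGroup.mul_mk, ← heq, FreeGroup.mk_toWord]
    rw [this] at hyx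
    exact (mul_right_cancel hyx.symm)
  have : x.toWord.length ≤ tx.length := by
    rw [hxmk, FreeGroup.toWord_mk]
    exact FreeGroup.reduce.red.length_le
  omega

/-- Forward direction of the main theorem. -/
lemma gamma_forward (x y : F2) (h : x⁻¹ * y ∈ ({a, a⁻¹, b, b⁻¹} : Set F2)) :
    (gamma x)⁻¹ * gamma y ∈ ({a, a⁻¹, b, b⁻¹} : Set F2) := by
  have hSinv : (x⁻¹ * y)⁻¹ ∈ ({a, a⁻¹, b, b⁻¹} : Set F2) := by
    rcases h with h | h | h | h <;> rw [h]
    · right; left; rfl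
    · rw [inv_inv]; left; rfl
    · right; right; right; rfl
    · rw [inv_inv]; right; right; left; rfl
  by_cases hx : beginsWith 0 x <;> by_cases hy : beginsWith 0 y
  · rwa [gamma, gamma, if_pos hx, if_pos hy]
  · -- x begins with a, y does not: then y = 1
    by_cases hy1 : y = 1
    · subst hy1
      rw [gamma, gamma, if_pos hx, if_neg hy, map_one, mul_one]
      rwa [mul_one] at h
    · exact absurd h (fun h' => keyK x y hx hy hy1 h')
  · -- y begins with a, x does not: then x = 1
    by_cases hx1 : x = 1
    · subst hx1
      rw [gamma, gamma, if_neg hx, if_pos hy, map_one, inv_one, one_mul]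
      rwa [inv_one, one_mul] at h
    · exfalso
      refine keyK y x hy hx hx1 ?_
      rwa [mul_inv_rev, inv_inv] at hSinv
  · rw [gamma, gamma, if_neg hx, if_neg hy, ← map_inv, ← map_mul]
    exact iota_S h

/-- `γ` preserves edges of the Cayley graph of `F₂` with respect to `{a, b}`:
for all `x, y`, `x⁻¹ * y ∈ S` iff `(γ x)⁻¹ * (γ y) ∈ S`, where `S = {a, a⁻¹, b, b⁻¹}`. -/
theorem gamma_cayley_automorphism :
    ∀ x y : F2, x⁻¹ * y ∈ ({a, a⁻¹, b, b⁻¹} : Set F2) ↔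
      (gamma x)⁻¹ * gamma y ∈ ({a, a⁻¹, b, b⁻¹} : Set F2) := by
  intro x y
  constructor
  · exact gamma_forward x y
  · intro h
    have := gamma_forward (gamma x) (gamma y) h
    rwa [gamma_gamma, gamma_gamma] at this
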